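/- The mass element m² := P₀² + q⁻¹P₋P₊ + qP₊P₋ − P₃² is central in the q-Minkowski algebra ℝ_q^{1,3}: it commutes with P₀, P₋, P₊, and P₃. -/
import Mathlib


/-- The mass element `m² = P₀² + q⁻¹P₋P₊ + qP₊P₋ − P₃²` is central in
the q-Minkowski algebra `ℝ_q^{1,3}`: it commutes with `P₀`, `P₋`, `P₊`, `P₃`.
The algebra is presented by `P₀P_A = P_AP₀` and `P_AP_B ε^{AB}_C = −λP₀P_C`
(written out below for `C ∈ {−,3,+}` using the nonzero ε-components). -/
theorem statement10 {A : Type*} [Ring A] [Algebra ℝ A] (q : ℝ) (hq : 1 < q)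
    (P0 Pm Pp P3 : A)
    (h0m : P0 * Pm = Pm * P0) (h03 : P0 * P3 = P3 * P0) (h0p : P0 * Pp = Pp * P0)
    -- C = − :  ε^{−3}_− P₋P₃ + ε^{3−}_− P₃P₋ = −λ P₀P₋
    (hCm : q⁻¹ • (Pm * P3) - q • (P3 * Pm) = -((q - q⁻¹) • (P0 * Pm)))
    -- C = 3 :  ε^{−+}_3 P₋P₊ + ε^{+−}_3 P₊P₋ + ε^{33}_3 P₃P₃ = −λ P₀P₃
    (hC3 : Pm * Pp - Pp * Pm - (q - q⁻¹) • (P3 * P3) = -((q - q⁻¹) • (P0 * P3)))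
    -- C = + :  ε^{3+}_+ P₃P₊ + ε^{+3}_+ P₊P₃ = −λ P₀P₊
    (hCp : q⁻¹ • (P3 * Pp) - q • (Pp * P3) = -((q - q⁻¹) • (P0 * Pp))) :
    (fun (M : A) =>
        M * P0 = P0 * M ∧ M * Pm = Pm * M ∧ M * Pp = Pp * M ∧ M * P3 = P3 * M)
      (P0 * P0 + q⁻¹ • (Pm * Pp) + q • (Pp * Pm) - P3 * P3) := by
  have hq0 : q ≠ 0 := by positivity
  -- commuting P0 to the left
  have cm0 : Pm * P0 = P0 * Pm := h0m.symm
  have c30 : P3 * P0 = P0 * P3 := h03.symm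
  have cp0 : Pp * P0 = P0 * Pp := h0p.symm
  have cm0' : ∀ x : A, Pm * (P0 * x) = P0 * (Pm * x) := fun x => by
    rw [← mul_assoc, cm0, mul_assoc]
  have c30' : ∀ x : A, P3 * (P0 * x) = P0 * (P3 * x) := fun x => by
    rw [← mul_assoc, c30, mul_assoc]
  have cp0' : ∀ x : A, Pp * (P0 * x) = P0 * (Pp * x) := fun x => by
    rw [← mul_assoc, cp0, mul_assoc]
  -- the rewriting rules
  have E1 : Pm * Pp = Pp * Pm + (q - q⁻¹) • (P3 * P3) - (q - q⁻¹) • (P0 * P3) := by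
    linear_combination (norm := module) hC3
  have E2 : Pm * P3 = (q*q) • (P3 * Pm) - (q*(q - q⁻¹)) • (P0 * Pm) := by
    have h2 := congrArg (q • ·) hCm
    simp only [smul_sub, smul_smul, smul_neg, mul_inv_cancel₀ hq0, one_smul] at h2
    linear_combination (norm := module) h2
  have E3 : P3 * Pp = (q*q) • (Pp * P3) - (q*(q - q⁻¹)) • (P0 * Pp) := by
    have h2 := congrArg (q • ·) hCp
    simp only [smul_sub, smul_smul, smul_neg, mul_inv_cancel₀ hq0, one_smul] at h2
    linear_combination (norm := module) h2
  have E1' : ∀ x : A, Pm * (Pp * x) =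
      Pp * (Pm * x) + (q - q⁻¹) • (P3 * (P3 * x)) - (q - q⁻¹) • (P0 * (P3 * x)) := fun x => by
    rw [← mul_assoc, E1]
    simp only [add_mul, sub_mul, smul_mul_assoc, mul_assoc]
  have E2' : ∀ x : A, Pm * (P3 * x) =
      (q*q) • (P3 * (Pm * x)) - (q*(q - q⁻¹)) • (P0 * (Pm * x)) := fun x => by
    rw [← mul_assoc, E2]
    simp only [sub_mul, smul_mul_assoc, mul_assoc]
  have E3' : ∀ x : A, P3 * (Pp * x) =
      (q*q) • (Pp * (P3 * x)) - (q*(q - q⁻¹)) • (P0 * (Pp * x)) := fun x => by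
    rw [← mul_assoc, E3]
    simp only [sub_mul, smul_mul_assoc, mul_assoc]
  refine ⟨?_, ?_, ?_, ?_⟩ <;>
  · simp only [mul_assoc, add_mul, sub_mul, mul_add, mul_sub, smul_mul_assoc, mul_smul_comm,
      smul_add, smul_sub, smul_smul, E1', E1, E2', E2, E3', E3, cm0', cm0, c30', c30, cp0', cp0]
    try match_scalars <;> (field_simp; try ring)
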